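/- Let A be a symmetric positive definite symplectic 2n×2n real matrix, partitioned into n×n blocks A = [[A11, A12], [A12ᵀ, A22]]. Then the Schur complement S = A22 − A12ᵀ·A11⁻¹·A12 of A11 in A is symmetric positive definite and satisfies S = A11⁻¹. -/

import Mathlib

open Matrix

/-- The standard symplectic matrix `J = [[0, I], [-I, 0]]`. -/
noncomputable def symplJ (n : ℕ) : Matrix (Fin n ⊕ Fin n) (Fin n ⊕ Fin n) ℝ :=
  Matrix.fromBlocks 0 1 (-1) 0

/-- For a symmetric positive definite symplectic matrix
`A = [[A11, A12], [A12ᵀ, A22]]`, the Schur complement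
`S = A22 − A12ᵀ A11⁻¹ A12` of `A11` in `A` is symmetric positive definite and
equals `A11⁻¹`. -/
theorem schur_complement_eq_inv (n : ℕ)
    (A11 A12 A22 : Matrix (Fin n) (Fin n) ℝ)
    (A : Matrix (Fin n ⊕ Fin n) (Fin n ⊕ Fin n) ℝ)
    (hA : A = Matrix.fromBlocks A11 A12 A12ᵀ A22)
    (hsym : Aᵀ = A) (hpd : A.PosDef)
    (hsympl : Aᵀ * symplJ n * A = symplJ n)
    (S : Matrix (Fin n) (Fin n) ℝ)
    (hS : S = A22 - A12ᵀ * A11⁻¹ * A12) :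
    S.PosDef ∧ S = A11⁻¹ := by
  -- A11 is positive definite
  have hA11 : A11.PosDef := by
    refine posDef_iff_dotProduct_mulVec.mpr ⟨?_, ?_⟩
    · have h11 : A11 = A11ᵀ := by
        have := congrArg Matrix.toBlocks₁₁ (hsym.symm.trans (by rw [hA]))
        simpa [hA, fromBlocks_transpose] using this
      ext i j
      simpa [conjTranspose_apply] using congrFun (congrFun h11 j) i
    · intro x hx
      have hy : (Sum.elim x 0 : Fin n ⊕ Fin n → ℝ) ≠ 0 := by
        intro h
        apply hx
        funext i
        exact congrFun h (Sum.inl i)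
      have := hpd.dotProduct_mulVec_pos hy
      rw [hA] at this
      simpa [fromBlocks_mulVec, sumElim_dotProduct_sumElim, star_trivial,
        Sum.elim_comp_inl_inr] using this
  -- block equations from symplecticity
  have hAJ : A * symplJ n * A = symplJ n := by rwa [hsym] at hsympl
  have hprod : fromBlocks (A11 * A12ᵀ - A12 * A11) (A11 * A22 - A12 * A12)
      (A12ᵀ * A12ᵀ - A22 * A11) (A12ᵀ * A22 - A22 * A12)
      = fromBlocks 0 1 (-1) 0 := by
    have hexp : A * symplJ n * A = fromBlocks (A11 * A12ᵀ - A12 * A11) (A11 * A22 - A12 * A12)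
        (A12ᵀ * A12ᵀ - A22 * A11) (A12ᵀ * A22 - A22 * A12) := by
      rw [hA, symplJ, fromBlocks_multiply, fromBlocks_multiply]
      congr 1 <;> noncomm_ring
    rw [← hexp, hAJ, symplJ]
  have g11 : A11 * A12ᵀ = A12 * A11 := by
    have := congrArg Matrix.toBlocks₁₁ hprod
    simpa [sub_eq_zero] using this
  have g21 : A22 * A11 - A12ᵀ * A12ᵀ = 1 := by
    have := congrArg Matrix.toBlocks₂₁ hprod
    simp only [toBlocks_fromBlocks₂₁] at this
    linear_combination (norm := noncomm_ring) -this
  have hdet : IsUnit A11.det := isUnit_iff_ne_zero.mpr hA11.det_pos.ne'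
  have key : A11⁻¹ * A12 * A11 = A12ᵀ := by
    calc A11⁻¹ * A12 * A11 = A11⁻¹ * (A12 * A11) := by rw [Matrix.mul_assoc]
    _ = A11⁻¹ * (A11 * A12ᵀ) := by rw [g11]
    _ = A12ᵀ := by rw [← Matrix.mul_assoc, Matrix.nonsing_inv_mul _ hdet, Matrix.one_mul]
  have hSA : S * A11 = 1 := by
    have : A12ᵀ * A11⁻¹ * A12 * A11 = A12ᵀ * A12ᵀ := by
      rw [Matrix.mul_assoc, Matrix.mul_assoc, ← Matrix.mul_assoc A11⁻¹, key]
    rw [hS, Matrix.sub_mul, this, g21]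
  have hSeq : S = A11⁻¹ := (Matrix.inv_eq_left_inv hSA).symm
  exact ⟨hSeq ▸ hA11.inv, hSeq⟩
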